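/- Let X be a complex separable Banach space and let T ∈ B(X) be invertible and transitive (no nontrivial closed invariant subspace). Let x₀ ∈ X be nonzero with 𝔑 ≠ X, where 𝔑 is the closed linear span of {xₙ : n ≥ 1}, xₙ = T^{−n}x₀, and let x₁* ∈ X* satisfy ⟨x₁*, xₙ⟩ = δ₁ₙ for all n ≥ 1. Define T₁ ∈ B(X) by T₁x = Tx − ⟨x₁*, x⟩x₀. Then: (1) 𝔑 is invariant under both T₁ and T⁻¹; (2) the quotient operators satisfy (T⁻¹)^𝔑 ∘ T₁^𝔑 = I on X/𝔑; (3) x₀ ∉ 𝔑, the coset x₀ + 𝔑 lies in ker((T⁻¹)^𝔑), and x₀ + 𝔑 is a cyclic vector of T₁^𝔑, i.e., the closed linear span of {(T₁^𝔑)ᵏ(x₀+𝔑) : k ≥ 0} equals X/𝔑. -/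

import Mathlib

/-- `𝔑₋ₖ`: the closed linear span of `{S^n x₀ : n ≥ k}` (here `S = T⁻¹`). -/
def closedSpanOrbitFrom {X : Type*} [NormedAddCommGroup X] [NormedSpace ℂ X]
    (S : X →L[ℂ] X) (x₀ : X) (k : ℕ) : Submodule ℂ X :=
  (Submodule.span ℂ {y : X | ∃ n : ℕ, k ≤ n ∧ y = (S ^ n) x₀}).topologicalClosure

/-- `T` is transitive: it has no nontrivial closed invariant subspace. -/
def IsTransitiveOp {X : Type*} [NormedAddCommGroup X] [NormedSpace ℂ X]
    (T : X →L[ℂ] X) : Prop :=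
  ∀ Y : Submodule ℂ X, IsClosed (Y : Set X) → (∀ x ∈ Y, T x ∈ Y) → Y = ⊥ ∨ Y = ⊤

/-- Let `X` be a complex separable Banach space, `T ∈ B(X)` invertible
(with inverse `S`) and transitive, `x₀ ≠ 0` with `𝔑 ≠ X`, `x₁*` biorthogonal to the
sequence `xₙ = T^{−n}x₀` (`⟨x₁*, xₙ⟩ = δ₁ₙ`), and `T₁ x = T x − ⟨x₁*, x⟩x₀`.  Then:
(1) `𝔑` is invariant under `T₁` and `T⁻¹`; (2) the quotient operators satisfy
`(T⁻¹)^𝔑 ∘ T₁^𝔑 = I` on `X/𝔑`; (3) `x₀ ∉ 𝔑`, `x₀ + 𝔑 ∈ ker (T⁻¹)^𝔑`, and `x₀ + 𝔑` is a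
cyclic vector of `T₁^𝔑`. -/
theorem quotient_operators_properties
    (X : Type*) [NormedAddCommGroup X] [NormedSpace ℂ X] [CompleteSpace X]
    [TopologicalSpace.SeparableSpace X]
    (T S : X →L[ℂ] X)
    (hTS : T.comp S = ContinuousLinearMap.id ℂ X)
    (hST : S.comp T = ContinuousLinearMap.id ℂ X)
    (htrans : IsTransitiveOp T)
    (x₀ : X) (hx₀ : x₀ ≠ 0)
    (hN : closedSpanOrbitFrom S x₀ 1 ≠ ⊤)
    (f : X →L[ℂ] ℂ)
    (hf : ∀ n : ℕ, 1 ≤ n → f ((S ^ n) x₀) = if n = 1 then 1 else 0)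
    (Sq T1q : (X ⧸ closedSpanOrbitFrom S x₀ 1) →L[ℂ] (X ⧸ closedSpanOrbitFrom S x₀ 1))
    (hSq : ∀ x : X, Sq (Submodule.Quotient.mk x) = Submodule.Quotient.mk (S x))
    (hT1q : ∀ x : X,
      T1q (Submodule.Quotient.mk x) = Submodule.Quotient.mk (T x - f x • x₀)) :
    -- (1) 𝔑 is invariant under T₁ and T⁻¹
    ((∀ x ∈ closedSpanOrbitFrom S x₀ 1, T x - f x • x₀ ∈ closedSpanOrbitFrom S x₀ 1) ∧
     (∀ x ∈ closedSpanOrbitFrom S x₀ 1, S x ∈ closedSpanOrbitFrom S x₀ 1)) ∧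
    -- (2) (T⁻¹)^𝔑 ∘ T₁^𝔑 = I on X/𝔑
    (Sq.comp T1q = ContinuousLinearMap.id ℂ (X ⧸ closedSpanOrbitFrom S x₀ 1)) ∧
    -- (3)
    (x₀ ∉ closedSpanOrbitFrom S x₀ 1 ∧
     Sq (Submodule.Quotient.mk x₀) = 0 ∧
     (Submodule.span ℂ
        (Set.range fun k : ℕ =>
          (T1q ^ k) (Submodule.Quotient.mk x₀ : X ⧸ closedSpanOrbitFrom S x₀ 1))
       ).topologicalClosure = ⊤) := by
  have hTSa : ∀ y, T (S y) = y := fun y => by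
    simpa using DFunLike.congr_fun hTS y
  have hSTa : ∀ y, S (T y) = y := fun y => by
    simpa using DFunLike.congr_fun hST y
  have hgen : ∀ n : ℕ, 1 ≤ n → (S ^ n) x₀ ∈ (closedSpanOrbitFrom S x₀ 1) := fun n hn =>
    Submodule.le_topologicalClosure _ (Submodule.subset_span ⟨n, hn, rfl⟩)
  have hNclosed : IsClosed ((closedSpanOrbitFrom S x₀ 1) : Set X) := Submodule.isClosed_topologicalClosure _
  have hSpow : ∀ n : ℕ, S ((S ^ n) x₀) = (S ^ (n + 1)) x₀ := by
    intro n
    rw [pow_succ']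
    rfl
  have hTn : ∀ n : ℕ, T ((S ^ (n + 1)) x₀) = (S ^ n) x₀ := by
    intro n
    rw [← hSpow, hTSa]
  -- key: a continuous linear map sending the generators into (closedSpanOrbitFrom S x₀ 1) maps (closedSpanOrbitFrom S x₀ 1) into (closedSpanOrbitFrom S x₀ 1)
  have key : ∀ A : X →L[ℂ] X, (∀ n : ℕ, 1 ≤ n → A ((S ^ n) x₀) ∈ (closedSpanOrbitFrom S x₀ 1)) →
      ∀ x ∈ (closedSpanOrbitFrom S x₀ 1), A x ∈ (closedSpanOrbitFrom S x₀ 1) := by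
    intro A hA x hx
    have hle : (closedSpanOrbitFrom S x₀ 1) ≤ Submodule.comap (A : X →ₗ[ℂ] X) (closedSpanOrbitFrom S x₀ 1) := by
      apply Submodule.topologicalClosure_minimal
      · rw [Submodule.span_le]
        rintro y ⟨n, hn, rfl⟩
        exact hA n hn
      · exact hNclosed.preimage A.continuous
    exact hle hx
  -- (1a)
  have h1a : ∀ x ∈ (closedSpanOrbitFrom S x₀ 1), T x - f x • x₀ ∈ (closedSpanOrbitFrom S x₀ 1) := by
    have := key (T - f.smulRight x₀) ?_
    · intro x hx
      simpa using this x hx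
    · intro n hn
      obtain ⟨m, rfl⟩ : ∃ m, n = m + 1 := ⟨n - 1, (Nat.succ_pred_eq_of_pos hn).symm⟩
      rcases Nat.eq_zero_or_pos m with h0 | hpos
      · subst h0
        have heq : (T - f.smulRight x₀) ((S ^ 1) x₀) = 0 := by
          rw [ContinuousLinearMap.sub_apply, ContinuousLinearMap.smulRight_apply,
            hTn 0, hf 1 le_rfl]
          simp
        rw [heq]
        exact (closedSpanOrbitFrom S x₀ 1).zero_mem
      · have hne : m + 1 ≠ 1 := by omega
        have heq : (T - f.smulRight x₀) ((S ^ (m + 1)) x₀) = (S ^ m) x₀ := by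
          rw [ContinuousLinearMap.sub_apply, ContinuousLinearMap.smulRight_apply,
            hTn m, hf (m + 1) (by omega)]
          simp [hne, hpos.ne']
        rw [heq]
        exact hgen m hpos
  -- (1b)
  have h1b : ∀ x ∈ (closedSpanOrbitFrom S x₀ 1), S x ∈ (closedSpanOrbitFrom S x₀ 1) := by
    apply key
    intro n hn
    rw [hSpow]
    exact hgen (n + 1) (by omega)
  have hSx0mem : S x₀ ∈ (closedSpanOrbitFrom S x₀ 1) := by simpa using hgen 1 le_rfl
  have hSx0mk : (Submodule.Quotient.mk (S x₀) : X ⧸ (closedSpanOrbitFrom S x₀ 1)) = 0 :=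
    (Submodule.Quotient.mk_eq_zero (closedSpanOrbitFrom S x₀ 1)).mpr hSx0mem
  -- (2)
  have h2 : Sq.comp T1q = ContinuousLinearMap.id ℂ (X ⧸ (closedSpanOrbitFrom S x₀ 1)) := by
    refine ContinuousLinearMap.ext fun q => ?_
    obtain ⟨x, rfl⟩ := Submodule.Quotient.mk_surjective (closedSpanOrbitFrom S x₀ 1) q
    rw [ContinuousLinearMap.comp_apply, hT1q, hSq]
    have hs : S (T x - f x • x₀) = x - f x • S x₀ := by
      simp [map_sub, map_smul, hSTa]
    rw [hs]
    simp [Submodule.Quotient.mk_sub, Submodule.Quotient.mk_smul, hSx0mk]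
  -- (3a)
  have h3a : x₀ ∉ (closedSpanOrbitFrom S x₀ 1) := by
    intro hx0N
    have hTinv : ∀ x ∈ (closedSpanOrbitFrom S x₀ 1), T x ∈ (closedSpanOrbitFrom S x₀ 1) := by
      apply key
      intro n hn
      obtain ⟨m, rfl⟩ : ∃ m, n = m + 1 := ⟨n - 1, (Nat.succ_pred_eq_of_pos hn).symm⟩
      rw [hTn]
      rcases Nat.eq_zero_or_pos m with h0 | hpos
      · subst h0; simpa using hx0N
      · exact hgen m hpos
    rcases htrans (closedSpanOrbitFrom S x₀ 1) hNclosed hTinv with h | h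
    · have : S x₀ ∈ (⊥ : Submodule ℂ X) := h ▸ hSx0mem
      have hS0 : S x₀ = 0 := by simpa using this
      exact hx₀ (by rw [← hTSa x₀, hS0, map_zero])
    · exact hN h
  -- (3b)
  have h3b : Sq (Submodule.Quotient.mk x₀) = 0 := by
    rw [hSq]; exact hSx0mk
  -- (3c)
  have h3c : (Submodule.span ℂ
      (Set.range fun k : ℕ =>
        (T1q ^ k) (Submodule.Quotient.mk x₀ : X ⧸ (closedSpanOrbitFrom S x₀ 1)))).topologicalClosure = ⊤ := by
    set C := (Submodule.span ℂ
      (Set.range fun k : ℕ =>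
        (T1q ^ k) (Submodule.Quotient.mk x₀ : X ⧸ (closedSpanOrbitFrom S x₀ 1)))).topologicalClosure with hCdef
    have hCclosed : IsClosed (C : Set (X ⧸ (closedSpanOrbitFrom S x₀ 1))) := Submodule.isClosed_topologicalClosure _
    have hgenC : ∀ k : ℕ, (T1q ^ k) (Submodule.Quotient.mk x₀ : X ⧸ (closedSpanOrbitFrom S x₀ 1)) ∈ C := fun k =>
      Submodule.le_topologicalClosure _ (Submodule.subset_span ⟨k, rfl⟩)
    have hx0C : (Submodule.Quotient.mk x₀ : X ⧸ (closedSpanOrbitFrom S x₀ 1)) ∈ C := by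
      simpa using hgenC 0
    have hCT1 : ∀ q ∈ C, T1q q ∈ C := by
      intro q hq
      have hle : C ≤ Submodule.comap (T1q : (X ⧸ (closedSpanOrbitFrom S x₀ 1)) →ₗ[ℂ] (X ⧸ (closedSpanOrbitFrom S x₀ 1))) C := by
        apply Submodule.topologicalClosure_minimal
        · rw [Submodule.span_le]
          rintro y ⟨k, rfl⟩
          have : T1q ((T1q ^ k) (Submodule.Quotient.mk x₀ : X ⧸ (closedSpanOrbitFrom S x₀ 1))) =
              (T1q ^ (k + 1)) (Submodule.Quotient.mk x₀ : X ⧸ (closedSpanOrbitFrom S x₀ 1)) := by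
            rw [pow_succ']; rfl
          have h := hgenC (k + 1)
          rw [← this] at h
          exact h
        · exact hCclosed.preimage T1q.continuous
      exact hle hq
    have hmkcont : Continuous ((closedSpanOrbitFrom S x₀ 1).mkQ) :=
      AddMonoidHomClass.continuous_of_bound (closedSpanOrbitFrom S x₀ 1).mkQ 1
        (fun x => by simpa using Submodule.Quotient.norm_mk_le (closedSpanOrbitFrom S x₀ 1) x)
    set W : Submodule ℂ X := C.comap (closedSpanOrbitFrom S x₀ 1).mkQ with hWdef
    have hWclosed : IsClosed (W : Set X) := hCclosed.preimage hmkcont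
    have hWT : ∀ x ∈ W, T x ∈ W := by
      intro x hx
      have hx' : (Submodule.Quotient.mk x : X ⧸ (closedSpanOrbitFrom S x₀ 1)) ∈ C := hx
      have h1 : (Submodule.Quotient.mk (T x) : X ⧸ (closedSpanOrbitFrom S x₀ 1)) =
          T1q (Submodule.Quotient.mk x) + f x • (Submodule.Quotient.mk x₀ : X ⧸ (closedSpanOrbitFrom S x₀ 1)) := by
        rw [hT1q]
        simp [Submodule.Quotient.mk_sub, Submodule.Quotient.mk_smul]
      show (Submodule.Quotient.mk (T x) : X ⧸ (closedSpanOrbitFrom S x₀ 1)) ∈ C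
      rw [h1]
      exact C.add_mem (hCT1 _ hx') (C.smul_mem _ hx0C)
    rcases htrans W hWclosed hWT with h | h
    · exfalso
      have : x₀ ∈ W := hx0C
      rw [h] at this
      exact hx₀ (by simpa using this)
    · rw [Submodule.eq_top_iff']
      intro q
      obtain ⟨x, rfl⟩ := Submodule.Quotient.mk_surjective (closedSpanOrbitFrom S x₀ 1) q
      have : x ∈ W := h ▸ Submodule.mem_top
      exact this
  exact ⟨⟨h1a, h1b⟩, h2, h3a, h3b, h3c⟩
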